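/- Performance bound for lasso in the prediction norm (Theorem 3.1, first part): Let c > 1 and c̄ = (c+1)/(c−1). Suppose κ(c̄) > 0, λ > 0, and λ ≥ c·n·‖S‖_∞. Then any lasso estimator β̂ satisfies ‖β̂ − β0‖_{2,n} ≤ (1 + 1/c)·λ√s/(n·κ(c̄)) + 2·c_s. -/

import Mathlib

open Finset MeasureTheory ProbabilityTheory

noncomputable section

/-- Prediction norm `‖δ‖_{2,n} = ((1/n) ∑_i (x_i'δ)²)^{1/2}`. -/
def predNorm (n p : ℕ) (x : Fin n → Fin p → ℝ) (δ : Fin p → ℝ) : ℝ :=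
  Real.sqrt ((n : ℝ)⁻¹ * ∑ i, (∑ j, x i j * δ j) ^ 2)

/-- Least-squares criterion `Q̂(β) = (1/n) ∑_i (y_i - x_i'β)²`. -/
def Qls (n p : ℕ) (x : Fin n → Fin p → ℝ) (y : Fin n → ℝ) (β : Fin p → ℝ) : ℝ :=
  (n : ℝ)⁻¹ * ∑ i, (y i - ∑ j, x i j * β j) ^ 2

/-- ℓ1-norm on `ℝ^p`. -/
def l1 {p : ℕ} (v : Fin p → ℝ) : ℝ := ∑ j, |v j|

/-- sup-norm (max-absolute-coordinate norm) on `ℝ^p`. -/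
def supNorm {p : ℕ} (v : Fin p → ℝ) : ℝ := ⨆ j, |v j|

/-- `restr A δ` is `δ` with coordinates outside `A` set to `0`. -/
def restr {p : ℕ} (A : Finset (Fin p)) (δ : Fin p → ℝ) : Fin p → ℝ :=
  fun j => if j ∈ A then δ j else 0

/-- Support of a vector, as a finset. -/
def suppF {p : ℕ} (v : Fin p → ℝ) : Finset (Fin p) :=
  Finset.univ.filter (fun j => v j ≠ 0)

/-- Restricted eigenvalue `κ(c̄)`. -/
def kappaRE (n p : ℕ) (x : Fin n → Fin p → ℝ) (T : Finset (Fin p)) (cbar : ℝ) : ℝ :=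
  sInf {r : ℝ | ∃ δ : Fin p → ℝ, δ ≠ 0 ∧ l1 (restr Tᶜ δ) ≤ cbar * l1 (restr T δ) ∧
    r = Real.sqrt T.card * predNorm n p x δ / l1 (restr T δ)}

/-- Restricted sparse maximal eigenvalue `φ(m)`. -/
def phiRSE (n p : ℕ) (x : Fin n → Fin p → ℝ) (T : Finset (Fin p)) (m : ℕ) : ℝ :=
  sSup {r : ℝ | ∃ δ : Fin p → ℝ, δ ≠ 0 ∧ (suppF (restr Tᶜ δ)).card ≤ m ∧
    r = (predNorm n p x δ) ^ 2 / ∑ j, δ j ^ 2}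

/-- Restricted sparse minimal eigenvalue `κ̃(m)²`. -/
def kappaTildeSq (n p : ℕ) (x : Fin n → Fin p → ℝ) (T : Finset (Fin p)) (m : ℕ) : ℝ :=
  sInf {r : ℝ | ∃ δ : Fin p → ℝ, δ ≠ 0 ∧ (suppF (restr Tᶜ δ)).card ≤ m ∧
    r = (predNorm n p x δ) ^ 2 / ∑ j, δ j ^ 2}

/-- The condition number `μ(m) = √φ(m)/κ̃(m)`. -/
def muCond (n p : ℕ) (x : Fin n → Fin p → ℝ) (T : Finset (Fin p)) (m : ℕ) : ℝ :=
  Real.sqrt (phiRSE n p x T m) / Real.sqrt (kappaTildeSq n p x T m)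

set_option maxHeartbeats 2000000 in
/-- Theorem 3.1, first part: performance bound for lasso in the
prediction norm. -/
theorem lasso_prediction_norm_bound
    (n p : ℕ) (hn : 0 < n) (hp : 0 < p)
    (x : Fin n → Fin p → ℝ) (y f : Fin n → ℝ)
    (hx : ∀ j, (n : ℝ)⁻¹ * ∑ i, x i j ^ 2 = 1)
    (β0 : Fin p → ℝ) (T : Finset (Fin p)) (hT : T = suppF β0)
    (s : ℕ) (hs : s = T.card) (hs1 : 1 ≤ s)
    (cs : ℝ) (hcs : cs = Real.sqrt ((n : ℝ)⁻¹ * ∑ i, (f i - ∑ j, x i j * β0 j) ^ 2))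
    (c : ℝ) (hc : 1 < c) (cbar : ℝ) (hcbar : cbar = (c + 1) / (c - 1))
    (hκ : 0 < kappaRE n p x T cbar)
    (S : Fin p → ℝ) (hS : S = fun j => (2 / n : ℝ) * ∑ i, (y i - f i) * x i j)
    (lam : ℝ) (hlam : 0 < lam) (hlamS : c * n * supNorm S ≤ lam)
    (βhat : Fin p → ℝ)
    (hβhat : ∀ β : Fin p → ℝ,
      Qls n p x y βhat + lam / n * l1 βhat ≤ Qls n p x y β + lam / n * l1 β) :
    predNorm n p x (βhat - β0) ≤
      (1 + 1 / c) * (lam * Real.sqrt s) / (n * kappaRE n p x T cbar) + 2 * cs := by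
  
  classical
  have hn0 : (0:ℝ) < n := by exact_mod_cast hn
  have hc0 : (0:ℝ) < c := by linarith
  have hcn : (0:ℝ) < c * n := mul_pos hc0 hn0
  have hnne : (n:ℝ) ≠ 0 := ne_of_gt hn0
  set δ : Fin p → ℝ := fun j => βhat j - β0 j with hδdef
  have hδeq : βhat - β0 = δ := rfl
  rw [hδeq]
  set D : Fin n → ℝ := fun i => ∑ j, x i j * δ j with hDdef
  set rr : Fin n → ℝ := fun i => f i - ∑ j, x i j * β0 j with hrdef
  set a := predNorm n p x δ with hadef
  set κv := kappaRE n p x T cbar with hκv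
  have ha0 : 0 ≤ a := Real.sqrt_nonneg _
  have hcs0 : 0 ≤ cs := hcs ▸ Real.sqrt_nonneg _
  -- l1 of restriction
  have hl1r : ∀ (A : Finset (Fin p)) (v : Fin p → ℝ),
      l1 (restr A v) = ∑ j ∈ A, |v j| := by
    intro A v
    simp [l1, restr, apply_ite abs, Finset.sum_ite_mem, Finset.univ_inter]
  set t := l1 (restr T δ) with htdef
  set u := l1 (restr Tᶜ δ) with hudef
  have ht_eq : t = ∑ j ∈ T, |δ j| := hl1r T δ
  have hu_eq : u = ∑ j ∈ Tᶜ, |δ j| := hl1r Tᶜ δ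
  have ht0 : 0 ≤ t := ht_eq ▸ Finset.sum_nonneg fun j _ => abs_nonneg _
  have hu0 : 0 ≤ u := hu_eq ▸ Finset.sum_nonneg fun j _ => abs_nonneg _
  have hl1δ : l1 δ = t + u := by
    rw [ht_eq, hu_eq, l1, Finset.sum_add_sum_compl]
  -- β0 vanishes off T
  have hβ0 : ∀ j, j ∉ T → β0 j = 0 := by
    intro j hj
    by_contra h
    exact hj (hT ▸ (by simp [suppF, h]))
  -- ℓ1 comparison
  have hstep3 : l1 β0 - l1 βhat ≤ t - u := by
    have h1 : l1 β0 = ∑ j ∈ T, |β0 j| := by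
      rw [l1, ← Finset.sum_add_sum_compl T]
      have : ∑ j ∈ Tᶜ, |β0 j| = 0 :=
        Finset.sum_eq_zero fun j hj => by
          rw [hβ0 j (Finset.mem_compl.mp hj), abs_zero]
      linarith [this]
    have h2 : l1 βhat = ∑ j ∈ T, |βhat j| + ∑ j ∈ Tᶜ, |βhat j| := by
      rw [l1, ← Finset.sum_add_sum_compl T]
    have h3 : ∑ j ∈ Tᶜ, |βhat j| = u := by
      rw [hu_eq]
      refine Finset.sum_congr rfl fun j hj => ?_
      rw [hδdef]
      simp [hβ0 j (Finset.mem_compl.mp hj)]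
    have h4 : ∑ j ∈ T, |β0 j| - ∑ j ∈ T, |βhat j| ≤ t := by
      rw [ht_eq, ← Finset.sum_sub_distrib]
      refine Finset.sum_le_sum fun j _ => ?_
      have := abs_sub_abs_le_abs_sub (β0 j) (βhat j)
      have h5 : |β0 j - βhat j| = |δ j| := by
        rw [hδdef]; simp [abs_sub_comm]
      linarith
    rw [h1, h2, h3]
    linarith
  -- optimality
  have hopt : Qls n p x y βhat - Qls n p x y β0 ≤ lam / n * (l1 β0 - l1 βhat) := by
    have := hβhat β0
    have h := mul_sub (lam / n) (l1 β0) (l1 βhat)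
    linarith
  -- algebraic identity
  set e : Fin n → ℝ := fun i => y i - ∑ j, x i j * β0 j with hedef
  have hlin : ∀ i, ∑ j, x i j * βhat j = (∑ j, x i j * β0 j) + D i := by
    intro i
    rw [hDdef]
    simp only [hδdef]
    rw [← Finset.sum_add_distrib]
    exact Finset.sum_congr rfl fun j _ => by ring
  set P := (n : ℝ)⁻¹ * ∑ i, D i ^ 2 with hPdef
  have hP0 : 0 ≤ P := by
    apply mul_nonneg (by positivity)
    exact Finset.sum_nonneg fun i _ => sq_nonneg _
  have ha2 : a ^ 2 = P := Real.sq_sqrt hP0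
  have hQid : Qls n p x y βhat - Qls n p x y β0
      = P - ((n:ℝ)⁻¹ * ∑ i, 2 * e i * D i) := by
    rw [Qls, Qls, hPdef]
    rw [← mul_sub, ← mul_sub, ← Finset.sum_sub_distrib, ← Finset.sum_sub_distrib]
    congr 1
    refine Finset.sum_congr rfl fun i _ => ?_
    rw [hlin i]
    simp only [hedef]
    ring
  -- split the cross term
  have hcross : (n:ℝ)⁻¹ * ∑ i, 2 * e i * D i
      = (∑ j, S j * δ j) + 2 / (n:ℝ) * ∑ i, rr i * D i := by
    have he : ∀ i, e i = (y i - f i) + rr i := by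
      intro i; rw [hedef, hrdef]; ring
    have hSδ : ∑ j, S j * δ j = (n:ℝ)⁻¹ * ∑ i, 2 * (y i - f i) * D i := by
      rw [hS]
      simp only [hDdef, Finset.mul_sum, Finset.sum_mul]
      rw [Finset.sum_comm]
      refine Finset.sum_congr rfl fun i _ => Finset.sum_congr rfl fun j _ => ?_
      field_simp
    rw [hSδ, div_eq_mul_inv]
    rw [show (∑ i, 2 * e i * D i)
        = (∑ i, 2 * (y i - f i) * D i) + ∑ i, 2 * (rr i * D i) from by
      rw [← Finset.sum_add_distrib]
      exact Finset.sum_congr rfl fun i _ => by rw [he i]; ring]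
    rw [mul_add]
    congr 1
    simp only [Finset.mul_sum]
    exact Finset.sum_congr rfl fun i _ => by ring
  -- bound on score term
  have hSsup : ∀ j, |S j| ≤ supNorm S := by
    intro j
    simp only [supNorm]
    exact le_ciSup (f := fun j => |S j|) (Set.Finite.bddAbove (Set.finite_range _)) j
  have hsup0 : 0 ≤ supNorm S := le_trans (abs_nonneg _) (hSsup ⟨0, hp⟩)
  have hsupl : supNorm S ≤ lam / (c * n) := by
    rw [le_div_iff₀ hcn]
    calc supNorm S * (c * n) = c * n * supNorm S := by ring
      _ ≤ lam := hlamS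
  have hscore : ∑ j, S j * δ j ≤ lam / (c * n) * (t + u) := by
    have h1 : ∑ j, S j * δ j ≤ ∑ j, lam / (c * n) * |δ j| := by
      refine Finset.sum_le_sum fun j _ => ?_
      calc S j * δ j ≤ |S j * δ j| := le_abs_self _
        _ = |S j| * |δ j| := abs_mul _ _
        _ ≤ (lam / (c * n)) * |δ j| :=
            mul_le_mul_of_nonneg_right (le_trans (hSsup j) hsupl) (abs_nonneg _)
    calc ∑ j, S j * δ j ≤ ∑ j, lam / (c * n) * |δ j| := h1
      _ = lam / (c * n) * l1 δ := by rw [l1, Finset.mul_sum]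
      _ = lam / (c * n) * (t + u) := by rw [hl1δ]
  -- bound on approximation term (Cauchy-Schwarz)
  have hRa : 2 / (n:ℝ) * ∑ i, rr i * D i ≤ 2 * cs * a := by
    have hninv : (0:ℝ) ≤ (n:ℝ)⁻¹ := by positivity
    have hA0 : (0:ℝ) ≤ ∑ i, rr i ^ 2 := Finset.sum_nonneg fun i _ => sq_nonneg _
    have hB0 : (0:ℝ) ≤ ∑ i, D i ^ 2 := Finset.sum_nonneg fun i _ => sq_nonneg _
    have hcs2 : (∑ i, rr i * D i) ^ 2 ≤ (∑ i, rr i ^ 2) * ∑ i, D i ^ 2 :=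
      Finset.sum_mul_sq_le_sq_mul_sq _ _ _
    have hX : ∑ i, rr i * D i ≤ Real.sqrt (∑ i, rr i ^ 2) * Real.sqrt (∑ i, D i ^ 2) := by
      calc ∑ i, rr i * D i ≤ |∑ i, rr i * D i| := le_abs_self _
        _ = Real.sqrt ((∑ i, rr i * D i) ^ 2) := (Real.sqrt_sq_eq_abs _).symm
        _ ≤ Real.sqrt ((∑ i, rr i ^ 2) * ∑ i, D i ^ 2) := Real.sqrt_le_sqrt hcs2
        _ = Real.sqrt (∑ i, rr i ^ 2) * Real.sqrt (∑ i, D i ^ 2) := Real.sqrt_mul hA0 _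
    have hcsa : cs * a = (n:ℝ)⁻¹ * (Real.sqrt (∑ i, rr i ^ 2) * Real.sqrt (∑ i, D i ^ 2)) := by
      have h1 : cs = Real.sqrt ((n:ℝ)⁻¹) * Real.sqrt (∑ i, rr i ^ 2) := by
        rw [hcs, ← Real.sqrt_mul hninv]
      have h2 : a = Real.sqrt ((n:ℝ)⁻¹) * Real.sqrt (∑ i, D i ^ 2) := by
        rw [hadef, predNorm, ← Real.sqrt_mul hninv]
      rw [h1, h2]
      have h3 : Real.sqrt ((n:ℝ)⁻¹) * Real.sqrt ((n:ℝ)⁻¹) = (n:ℝ)⁻¹ :=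
        Real.mul_self_sqrt hninv
      calc Real.sqrt ((n:ℝ)⁻¹) * Real.sqrt (∑ i, rr i ^ 2) *
            (Real.sqrt ((n:ℝ)⁻¹) * Real.sqrt (∑ i, D i ^ 2))
          = (Real.sqrt ((n:ℝ)⁻¹) * Real.sqrt ((n:ℝ)⁻¹)) *
            (Real.sqrt (∑ i, rr i ^ 2) * Real.sqrt (∑ i, D i ^ 2)) := by ring
        _ = _ := by rw [h3]
    have h2n : (0:ℝ) ≤ 2 / (n:ℝ) := by positivity
    calc 2 / (n:ℝ) * ∑ i, rr i * D i
        ≤ 2 / (n:ℝ) * (Real.sqrt (∑ i, rr i ^ 2) * Real.sqrt (∑ i, D i ^ 2)) :=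
          mul_le_mul_of_nonneg_left hX h2n
      _ = 2 * ((n:ℝ)⁻¹ * (Real.sqrt (∑ i, rr i ^ 2) * Real.sqrt (∑ i, D i ^ 2))) := by
          rw [div_eq_mul_inv]; ring
      _ = 2 * (cs * a) := by rw [hcsa]
      _ = 2 * cs * a := by ring
  -- main inequality
  have hmain : a ^ 2 ≤ 2 * cs * a + (lam / (c * n) * (t + u) + lam / n * (t - u)) := by
    have h1 : P - ((∑ j, S j * δ j) + 2 / (n:ℝ) * ∑ i, rr i * D i)
        ≤ lam / n * (t - u) := by
      have := hopt
      rw [hQid, hcross] at this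
      have hln : 0 ≤ lam / n := by positivity
      have := mul_le_mul_of_nonneg_left hstep3 hln
      linarith
    rw [ha2]
    linarith [hscore, hRa]
  -- RHS pieces
  have hκ' : 0 < κv := hκ
  have hsqs0 : 0 ≤ Real.sqrt s := Real.sqrt_nonneg _
  have hK0 : 0 ≤ (1 + 1 / c) * (lam * Real.sqrt s) / (n * κv) := by
    apply div_nonneg
    · apply mul_nonneg
      · have : 0 < 1 / c := by positivity
        linarith
      · exact mul_nonneg hlam.le hsqs0
    · exact mul_nonneg hn0.le hκ'.le
  by_cases hcone : u ≤ cbar * t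
  · -- cone case
    by_cases hδ0 : δ = 0
    · have : a = 0 := by
        rw [hadef, hδ0, predNorm]
        simp
      rw [this]
      linarith
    · -- use restricted eigenvalue
      have htpos : 0 < t := by
        rcases lt_or_eq_of_le ht0 with h | h
        · exact h
        · exfalso
          apply hδ0
          have ht' : t = 0 := h.symm
          have hu' : u = 0 := by
            have h2 := hcone
            rw [ht', mul_zero] at h2
            linarith
          have : l1 δ = 0 := by rw [hl1δ, ht', hu']; ring
          funext j
          have h0 : ∀ j' ∈ Finset.univ, |δ j'| = 0 := by
            refine (Finset.sum_eq_zero_iff_of_nonneg fun j' _ => abs_nonneg _).mp ?_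
            rw [← l1]; exact this
          have := h0 j (Finset.mem_univ j)
          simpa [abs_eq_zero] using this
      have hmem : κv ≤ Real.sqrt T.card * a / t := by
        rw [hκv, kappaRE]
        apply csInf_le
        · refine ⟨0, fun rv hrv => ?_⟩
          obtain ⟨δ', _, _, rfl⟩ := hrv
          apply div_nonneg
          · exact mul_nonneg (Real.sqrt_nonneg _) (Real.sqrt_nonneg _)
          · rw [hl1r]
            exact Finset.sum_nonneg fun j _ => abs_nonneg _
        · exact ⟨δ, hδ0, hcone, rfl⟩
      have htκ : t * κv ≤ Real.sqrt T.card * a := by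
        have := (le_div_iff₀ htpos).mp hmem
        linarith
      have ht_le : t ≤ Real.sqrt T.card * a / κv := by
        rw [le_div_iff₀ hκ']
        linarith
      -- coefficient comparison
      have hcoef : lam / (c * n) ≤ lam / n := by
        rw [div_le_div_iff₀ hcn hn0]
        have h1 : (n:ℝ) ≤ c * n := by nlinarith
        exact mul_le_mul_of_nonneg_left h1 hlam.le
      have hdrop : lam / (c * n) * (t + u) + lam / n * (t - u)
          ≤ (lam / (c * n) + lam / n) * t := by
        have : (lam / (c * n) - lam / n) * u ≤ 0 :=
          mul_nonpos_of_nonpos_of_nonneg (by linarith) hu0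
        nlinarith
      have hKa : (lam / (c * n) + lam / n) * t
          ≤ (1 + 1 / c) * (lam * Real.sqrt s) / (n * κv) * a := by
        have hcoef0 : 0 ≤ lam / (c * n) + lam / n := by positivity
        calc (lam / (c * n) + lam / n) * t
            ≤ (lam / (c * n) + lam / n) * (Real.sqrt T.card * a / κv) :=
              mul_le_mul_of_nonneg_left ht_le hcoef0
          _ = (1 + 1 / c) * (lam * Real.sqrt s) / (n * κv) * a := by
              rw [hs]
              field_simp
              ring
      have hfin : a ^ 2 ≤ (2 * cs + (1 + 1 / c) * (lam * Real.sqrt s) / (n * κv)) * a := by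
        nlinarith [hmain, hdrop, hKa]
      rcases eq_or_lt_of_le ha0 with ha' | ha'
      · rw [← ha']
        linarith
      · have := le_of_mul_le_mul_right (by rw [← sq]; linarith [hfin] : a * a ≤ (2 * cs + (1 + 1 / c) * (lam * Real.sqrt s) / (n * κv)) * a) ha'
        linarith
  · -- non-cone case: bracket is negative
    push_neg at hcone
    have hcm1 : (0:ℝ) < c - 1 := by linarith
    have hut : (c + 1) * t < u * (c - 1) := by
      rw [hcbar, div_mul_eq_mul_div, div_lt_iff₀ hcm1] at hcone
      linarith
    have hbr : lam / (c * n) * (t + u) + lam / n * (t - u) ≤ 0 := by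
      have heq : lam / (c * n) * (t + u) + lam / n * (t - u)
          = lam / (c * n) * ((t + u) + c * (t - u)) := by
        field_simp
      rw [heq]
      apply mul_nonpos_of_nonneg_of_nonpos (by positivity)
      nlinarith
    have h2cs : a ≤ 2 * cs := by
      by_contra h
      push_neg at h
      have ha' : 0 < a := by linarith
      nlinarith [hmain]
    linarith
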